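/- The graph of the function f(x) = 2^x is not a semilinear subset of ℕ². -/

import Mathlib

/-- A set in an additive commutative monoid is *linear* if it is of the form
`{b + n₁•u₁ + ⋯ + n_p•u_p | nᵢ ∈ ℕ}`. -/
def IsLinear {M : Type*} [AddCommMonoid M] (A : Set M) : Prop :=
  ∃ (b : M) (p : ℕ) (u : Fin p → M),
    A = {v | ∃ n : Fin p → ℕ, v = b + ∑ i, n i • u i}

/-- A set is *semilinear* if it is a finite union of linear sets. -/
def IsSemilinear {M : Type*} [AddCommMonoid M] (A : Set M) : Prop :=
  ∃ (t : ℕ) (L : Fin t → Set M), (∀ i, IsLinear (L i)) ∧ A = ⋃ i, L i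

theorem exp_graph_not_semilinear :
    ¬ IsSemilinear {v : Fin 2 → ℕ | v 1 = 2 ^ (v 0)} := by
  rintro ⟨t, L, hlin, hEq⟩
  have hGinf : {v : Fin 2 → ℕ | v 1 = 2 ^ (v 0)}.Infinite := by
    apply Set.infinite_of_injective_forall_mem (f := fun x : ℕ => ![x, 2 ^ x])
    · intro a b hab
      have := congrFun hab 0
      simpa using this
    · intro a; simp
  rw [hEq] at hGinf
  have hex : ∃ i, (L i).Infinite := by
    by_contra h
    push_neg at h
    exact hGinf (Set.finite_iUnion h)
  obtain ⟨i, hinf⟩ := hex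
  obtain ⟨b, p, u, hLi⟩ := hlin i
  have hj : ∃ j, u j ≠ 0 := by
    by_contra h
    push_neg at h
    apply hinf
    have hsub : L i ⊆ {b} := by
      rw [hLi]
      rintro v ⟨n, rfl⟩
      simp [h]
    exact (Set.finite_singleton b).subset hsub
  obtain ⟨j, hj⟩ := hj
  have hmem : ∀ m : ℕ, b + m • u j ∈ L i := by
    intro m
    rw [hLi]
    refine ⟨fun k => if k = j then m else 0, ?_⟩
    congr 1
    rw [Finset.sum_eq_single j]
    · simp
    · intro k _ hk; simp [hk]
    · intro hk; simp at hk
  have key : ∀ m : ℕ, b 1 + m * u j 1 = 2 ^ (b 0 + m * u j 0) := by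
    intro m
    have h1 : b + m • u j ∈ ⋃ k, L k := Set.mem_iUnion.mpr ⟨i, hmem m⟩
    rw [← hEq] at h1
    simpa using h1
  by_cases hc0 : u j 0 = 0
  · -- first component of u j is 0, so second must be too, contradiction
    have h0 := key 0
    have h1 := key 1
    rw [hc0] at h0 h1
    simp at h0 h1
    have hc1 : u j 1 = 0 := by omega
    apply hj
    funext k
    fin_cases k <;> simp [hc0, hc1]
  · have hc0' : 1 ≤ u j 0 := Nat.one_le_iff_ne_zero.mpr hc0
    have hE : ∀ m : ℕ, 2 ^ m ≤ u j 1 := by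
      intro m
      have h1 := key m
      have h2 := key (m + 1)
      have e1 : b 0 + (m + 1) * u j 0 = (b 0 + m * u j 0) + u j 0 := by ring
      rw [e1, pow_add] at h2
      have h3 : 2 ≤ 2 ^ (u j 0) := by
        calc 2 = 2 ^ 1 := (pow_one 2).symm
        _ ≤ 2 ^ (u j 0) := Nat.pow_le_pow_right (by norm_num) hc0'
      have h4 : 2 ^ (b 0 + m * u j 0) * 2 ≤ 2 ^ (b 0 + m * u j 0) * 2 ^ (u j 0) :=
        Nat.mul_le_mul_left _ h3
      have h5 : m ≤ b 0 + m * u j 0 := by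
        have : m * 1 ≤ m * u j 0 := Nat.mul_le_mul_left m hc0'
        omega
      have h6 : 2 ^ m ≤ 2 ^ (b 0 + m * u j 0) := Nat.pow_le_pow_right (by norm_num) h5
      have h7 : b 1 + (m + 1) * u j 1 = b 1 + m * u j 1 + u j 1 := by ring
      omega
    have := hE (u j 1)
    have := Nat.lt_two_pow_self (n := u j 1)
    omega
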